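/- arXiv:math/0312426 — 3 statements merged into one kernel-verified Lean document; each statement's English description precedes it below -/
import Mathlib

section
/- Assume that every element of Z(G) is the square of an element of Z(G) (i.e. 2Z(G) = Z(G), which holds when Z(G) is finite of odd order). Let x = (V,c,V̄,c̄) ∈ M with V generic, and suppose the K-orbit of x is fixed by τ, i.e. there exists (g₁,g₂) ∈ K with (g₁,g₂)·x = τ(x). Then the K-orbit of x contains a point of M^τ, i.e. a point of the form (W,c',W,c'); equivalently, the K-orbit of x lies in the image of the natural map I : M^τ/K^τ → M/K. -/
/-! Model of flat `G`-connections on `Σ_ℓ # RP²` and its orientable double cover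
(genus `2ℓ`), following the two-base-point description.  A point of `G^{4ℓ+2}`
is a tuple `(a₁,b₁,…,a_ℓ,b_ℓ,c, ā₁,b̄₁,…,ā_ℓ,b̄_ℓ,c̄)`. -/
structure Pt (G : Type*) (ℓ : ℕ) where
  a : Fin ℓ → G
  b : Fin ℓ → G
  c : G
  a' : Fin ℓ → G
  b' : Fin ℓ → G
  c' : G

variable {G : Type*} [Group G] {ℓ : ℕ}

open scoped commutatorElement in
/-- The ordered product of commutators `∏_{i=1}^{ℓ} [aᵢ,bᵢ]`. -/
def relProd (a b : Fin ℓ → G) : G := (List.ofFn fun i => ⁅a i, b i⁆).prod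

/-- Membership in `M`: `∏[aᵢ,bᵢ] = c·c̄` and `∏[āᵢ,b̄ᵢ] = c̄·c`. -/
def inM (x : Pt G ℓ) : Prop :=
  relProd x.a x.b = x.c * x.c' ∧ relProd x.a' x.b' = x.c' * x.c

/-- The action of `K = G × G` on tuples. -/
def act (g : G × G) (x : Pt G ℓ) : Pt G ℓ where
  a := fun i => g.1 * x.a i * g.1⁻¹
  b := fun i => g.1 * x.b i * g.1⁻¹
  c := g.1 * x.c * g.2⁻¹
  a' := fun i => g.2 * x.a' i * g.2⁻¹
  b' := fun i => g.2 * x.b' i * g.2⁻¹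
  c' := g.2 * x.c' * g.1⁻¹

/-- The involution `τ(V,c,V̄,c̄) = (V̄,c̄,V,c)`. -/
def tauPt (x : Pt G ℓ) : Pt G ℓ := ⟨x.a', x.b', x.c', x.a, x.b, x.c⟩

/-- Membership in `M^τ`: a point of `M` of the form `(V,c,V,c)`. -/
def inMtau (x : Pt G ℓ) : Prop := inM x ∧ x.a' = x.a ∧ x.b' = x.b ∧ x.c' = x.c

/-- `V = (a₁,b₁,…,a_ℓ,b_ℓ)` is generic if every `g` commuting with all `aᵢ, bᵢ`
is central. -/
def Generic (a b : Fin ℓ → G) : Prop :=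
  ∀ g : G, (∀ i, g * a i = a i * g) → (∀ i, g * b i = b i * g) →
    g ∈ Subgroup.center G

/-- Membership in `N_r = {(V,c,V,c·r) : ∏[aᵢ,bᵢ] = c²·r}`. -/
def inN (r : G) (x : Pt G ℓ) : Prop :=
  x.a' = x.a ∧ x.b' = x.b ∧ x.c' = x.c * r ∧ relProd x.a x.b = x.c ^ 2 * r

open scoped commutatorElement in
lemma relProd_conj (g : G) (a b : Fin ℓ → G) :
    relProd (fun i => g * a i * g⁻¹) (fun i => g * b i * g⁻¹) = g * relProd a b * g⁻¹ := by
  unfold relProd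
  have h : (List.ofFn fun i => ⁅g * a i * g⁻¹, g * b i * g⁻¹⁆) =
      (List.ofFn fun i => ⁅a i, b i⁆).map (MulAut.conj g) := by
    rw [List.map_ofFn]
    congr 1
    funext i
    simp only [Function.comp, MulAut.conj_apply, commutatorElement_def]
    group
  rw [h, ← map_list_prod (MulAut.conj g : G ≃* G)]
  simp [MulAut.conj_apply]

lemma inM_act (k : G × G) (x : Pt G ℓ) (h : inM x) : inM (act k x) := by
  obtain ⟨h1, h2⟩ := h
  constructor
  · show relProd (fun i => k.1 * x.a i * k.1⁻¹) (fun i => k.1 * x.b i * k.1⁻¹) = _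
    rw [relProd_conj, h1]
    show _ = (k.1 * x.c * k.2⁻¹) * (k.2 * x.c' * k.1⁻¹)
    group
  · show relProd (fun i => k.2 * x.a' i * k.2⁻¹) (fun i => k.2 * x.b' i * k.2⁻¹) = _
    rw [relProd_conj, h2]
    show _ = (k.2 * x.c' * k.1⁻¹) * (k.1 * x.c * k.2⁻¹)
    group

/-- if every central element is a square of a central element
(`2Z(G) = Z(G)`), then for generic `x ∈ M` whose `K`-orbit is fixed by `τ`,
the `K`-orbit of `x` contains a point of `M^τ`, i.e. the class of `x` lies in
the image of the natural map `I : M^τ/K^τ → M/K`. -/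
theorem statement2 (hℓ : 1 ≤ ℓ)
    (hsq : ∀ z ∈ Subgroup.center G, ∃ s ∈ Subgroup.center G, s * s = z)
    (x : Pt G ℓ) (hx : inM x) (hgen : Generic x.a x.b)
    (hfix : ∃ k : G × G, act k x = tauPt x) :
    ∃ k : G × G, inMtau (act k x) := by
  obtain ⟨⟨g₁, g₂⟩, hk⟩ := hfix
  simp only [act, tauPt, Pt.mk.injEq] at hk
  obtain ⟨ha, hb, hc, ha', hb', hc'⟩ := hk
  have hz : g₂ * g₁ ∈ Subgroup.center G := by
    apply hgen
    · intro i
      have h1 := congrFun ha i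
      have h2 := congrFun ha' i
      rw [← h1] at h2
      conv_rhs => rw [← h2]
      group
    · intro i
      have h1 := congrFun hb i
      have h2 := congrFun hb' i
      rw [← h1] at h2
      conv_rhs => rw [← h2]
      group
  obtain ⟨s, hs, hss⟩ := hsq _ hz
  have hsc : ∀ g : G, g * s = s * g := fun g => Subgroup.mem_center_iff.mp hs g
  have hzc : ∀ g : G, g * (g₂ * g₁) = (g₂ * g₁) * g := fun g =>
    Subgroup.mem_center_iff.mp hz g
  refine ⟨(1, s * g₁⁻¹), inM_act _ _ hx, ?_, ?_, ?_⟩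
  · funext i
    show (s * g₁⁻¹) * x.a' i * (s * g₁⁻¹)⁻¹ = 1 * x.a i * 1⁻¹
    rw [← congrFun ha i]
    calc (s * g₁⁻¹) * (g₁ * x.a i * g₁⁻¹) * (s * g₁⁻¹)⁻¹ = s * x.a i * s⁻¹ := by group
      _ = x.a i * s * s⁻¹ := by rw [← hsc (x.a i)]
      _ = 1 * x.a i * 1⁻¹ := by group
  · funext i
    show (s * g₁⁻¹) * x.b' i * (s * g₁⁻¹)⁻¹ = 1 * x.b i * 1⁻¹
    rw [← congrFun hb i]
    calc (s * g₁⁻¹) * (g₁ * x.b i * g₁⁻¹) * (s * g₁⁻¹)⁻¹ = s * x.b i * s⁻¹ := by group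
      _ = x.b i * s * s⁻¹ := by rw [← hsc (x.b i)]
      _ = 1 * x.b i * 1⁻¹ := by group
  · show (s * g₁⁻¹) * x.c' * 1⁻¹ = 1 * x.c * (s * g₁⁻¹)⁻¹
    rw [← hc]
    have hs2 : s * s = g₁ * g₂ := by
      rw [hss]
      calc g₂ * g₁ = (g₂ * g₁ * g₁) * g₁⁻¹ := by group
        _ = (g₁ * (g₂ * g₁)) * g₁⁻¹ := by rw [hzc g₁]
        _ = g₁ * g₂ := by group
    have hsinv : g₂ * s⁻¹ = s⁻¹ * g₂ := by
      calc g₂ * s⁻¹ = s⁻¹ * (s * g₂) * s⁻¹ := by group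
        _ = s⁻¹ * (g₂ * s) * s⁻¹ := by rw [hsc g₂]
        _ = s⁻¹ * g₂ := by group
    calc (s * g₁⁻¹) * (g₁ * x.c * g₂⁻¹) * 1⁻¹ = s * x.c * g₂⁻¹ := by group
      _ = x.c * s * g₂⁻¹ := by rw [← hsc (x.c)]
      _ = x.c * (s * s) * s⁻¹ * g₂⁻¹ := by group
      _ = x.c * (g₁ * g₂) * s⁻¹ * g₂⁻¹ := by rw [hs2]
      _ = x.c * g₁ * (g₂ * s⁻¹) * g₂⁻¹ := by group
      _ = x.c * g₁ * (s⁻¹ * g₂) * g₂⁻¹ := by rw [hsinv]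
      _ = 1 * x.c * (s * g₁⁻¹)⁻¹ := by group
end

section
/- Let r₁, r₂ ∈ Z(G) and suppose r₂ = r₁·s² for some s ∈ Z(G) (i.e. r₁ and r₂ have the same class in Z(G)/2Z(G)). Then N_{r₁} and N_{r₂} have the same image in the orbit space M/K: for every x ∈ N_{r₂} there exists k ∈ K with k·x ∈ N_{r₁}, and for every y ∈ N_{r₁} there exists k' ∈ K with k'·y ∈ N_{r₂}. -/
variable {G : Type*} [Group G] {ℓ : ℕ}

private lemma cent_powtwo {G : Type*} [Group G] (c s : G)
    (hsc : ∀ g : G, g * s = s * g) : (c * s) ^ 2 = c ^ 2 * s ^ 2 := by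
  calc (c * s) ^ 2 = c * (s * c) * s := by simp [pow_two, mul_assoc]
    _ = c * (c * s) * s := by rw [← hsc c]
    _ = c ^ 2 * s ^ 2 := by simp [pow_two, mul_assoc]

private lemma cent_key {G : Type*} [Group G] (s r : G)
    (hsc : ∀ g : G, g * s = s * g) (hr : ∀ g : G, g * r = r * g) :
    s⁻¹ * (r * s ^ 2) = r * s := by
  have h : r * s ^ 2 = s * (r * s) := by
    calc r * s ^ 2 = (r * s) * s := by simp [pow_two, mul_assoc]
      _ = s * (r * s) := hsc _
  rw [h, inv_mul_cancel_left]

/-- if `r₁, r₂ ∈ Z(G)` with `r₂ = r₁·s²` for some `s ∈ Z(G)`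
(same class in `Z(G)/2Z(G)`), then `N_{r₁}` and `N_{r₂}` have the same image
in the orbit space `M/K`. -/
theorem statement6 (hℓ : 1 ≤ ℓ) (r₁ r₂ : G)
    (hr₁ : r₁ ∈ Subgroup.center G) (hr₂ : r₂ ∈ Subgroup.center G)
    (s : G) (hs : s ∈ Subgroup.center G) (hrs : r₂ = r₁ * s ^ 2) :
    (∀ x : Pt G ℓ, inN r₂ x → ∃ k : G × G, inN r₁ (act k x)) ∧
    (∀ y : Pt G ℓ, inN r₁ y → ∃ k' : G × G, inN r₂ (act k' y)) := by
  have hsc : ∀ g : G, g * s = s * g := fun g => Subgroup.mem_center_iff.mp hs g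
  have hr1c : ∀ g : G, g * r₁ = r₁ * g := fun g => Subgroup.mem_center_iff.mp hr₁ g
  have hsi : ∀ g : G, g * s⁻¹ = s⁻¹ * g := fun g => by
    have h : Commute g s := hsc g
    exact h.inv_right.eq
  constructor
  · intro x hx
    obtain ⟨ha, hb, hc, hrel⟩ := hx
    refine ⟨(1, s⁻¹), ?_, ?_, ?_, ?_⟩
    · funext i; simp [act, ha, ← mul_assoc, ← hsi (x.a i)]
    · funext i; simp [act, hb, ← mul_assoc, ← hsi (x.b i)]
    · show s⁻¹ * x.c' * 1⁻¹ = 1 * x.c * s⁻¹⁻¹ * r₁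
      rw [hc, hrs, inv_one, mul_one, one_mul, inv_inv]
      calc s⁻¹ * (x.c * (r₁ * s ^ 2))
          = x.c * (s⁻¹ * (r₁ * s ^ 2)) := by
            rw [← mul_assoc, ← hsi x.c, mul_assoc]
        _ = x.c * (r₁ * s) := by rw [cent_key s r₁ hsc hr1c]
        _ = x.c * s * r₁ := by rw [← hr1c s]; simp [pow_two, mul_assoc]
    · show relProd (fun i => 1 * x.a i * 1⁻¹) (fun i => 1 * x.b i * 1⁻¹)
          = (1 * x.c * s⁻¹⁻¹) ^ 2 * r₁
      have hre : relProd (fun i => 1 * x.a i * 1⁻¹) (fun i => 1 * x.b i * 1⁻¹)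
          = relProd x.a x.b := by
        congr 1 <;> funext i <;> simp
      rw [hre, hrel, hrs, one_mul, inv_inv, cent_powtwo x.c s hsc]
      calc x.c ^ 2 * (r₁ * s ^ 2) = x.c ^ 2 * (s ^ 2 * r₁) := by rw [← hr1c]
        _ = x.c ^ 2 * s ^ 2 * r₁ := by rw [mul_assoc]
  · intro y hy
    obtain ⟨ha, hb, hc, hrel⟩ := hy
    refine ⟨(1, s), ?_, ?_, ?_, ?_⟩
    · funext i; simp [act, ha, ← mul_assoc, ← hsc (y.a i)]
    · funext i; simp [act, hb, ← mul_assoc, ← hsc (y.b i)]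
    · show s * y.c' * 1⁻¹ = 1 * y.c * s⁻¹ * r₂
      rw [hc, hrs, inv_one, mul_one, one_mul]
      calc s * (y.c * r₁) = y.c * r₁ * s := (hsc _).symm
        _ = y.c * (s⁻¹ * (r₁ * s ^ 2)) := by rw [cent_key s r₁ hsc hr1c]; simp [pow_two, mul_assoc]
        _ = y.c * s⁻¹ * (r₁ * s ^ 2) := by rw [mul_assoc]
    · show relProd (fun i => 1 * y.a i * 1⁻¹) (fun i => 1 * y.b i * 1⁻¹)
          = (1 * y.c * s⁻¹) ^ 2 * r₂
      have hre : relProd (fun i => 1 * y.a i * 1⁻¹) (fun i => 1 * y.b i * 1⁻¹)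
          = relProd y.a y.b := by
        congr 1 <;> funext i <;> simp
      rw [hre, hrel, hrs, one_mul, cent_powtwo y.c s⁻¹ hsi]
      calc y.c ^ 2 * r₁
          = y.c ^ 2 * ((s⁻¹) ^ 2 * (s ^ 2 * r₁)) := by simp [pow_two, mul_assoc]
        _ = y.c ^ 2 * ((s⁻¹) ^ 2 * (r₁ * s ^ 2)) := by rw [← hr1c]
        _ = y.c ^ 2 * (s⁻¹) ^ 2 * (r₁ * s ^ 2) := by rw [mul_assoc]
end

section
/- For every r ∈ Z(G) and every point x = (V,d,c,V,d,c·r) ∈ M, one has (r,e)·x = τ(x). Consequently τ(x) lies in the K-orbit of x, so every K-orbit containing such a point is fixed by the involution induced by τ on the orbit space M/K. -/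
/-! Model of flat `G`-connections on `Σ_ℓ # Klein bottle` and its orientable
double cover (genus `2ℓ+1`), in the two-base-point description.  A point of
`G^{4ℓ+4}` is a tuple `(a₁,b₁,…,a_ℓ,b_ℓ,d,c, ā₁,b̄₁,…,ā_ℓ,b̄_ℓ,d̄,c̄)`. -/
structure PtK (G : Type*) (ℓ : ℕ) where
  a : Fin ℓ → G
  b : Fin ℓ → G
  d : G
  c : G
  a' : Fin ℓ → G
  b' : Fin ℓ → G
  d' : G
  c' : G

variable {G : Type*} [Group G] {ℓ : ℕ}

/-- Membership in `M`: `∏[aᵢ,bᵢ] = c·d̄·c⁻¹·d` and `∏[āᵢ,b̄ᵢ] = c̄·d·c̄⁻¹·d̄`. -/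
def inMK (x : PtK G ℓ) : Prop :=
  relProd x.a x.b = x.c * x.d' * x.c⁻¹ * x.d ∧
  relProd x.a' x.b' = x.c' * x.d * x.c'⁻¹ * x.d'

/-- The action of `K = G × G` on tuples. -/
def actK (g : G × G) (x : PtK G ℓ) : PtK G ℓ where
  a := fun i => g.1 * x.a i * g.1⁻¹
  b := fun i => g.1 * x.b i * g.1⁻¹
  d := g.1 * x.d * g.1⁻¹
  c := g.1 * x.c * g.2⁻¹
  a' := fun i => g.2 * x.a' i * g.2⁻¹
  b' := fun i => g.2 * x.b' i * g.2⁻¹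
  d' := g.2 * x.d' * g.2⁻¹
  c' := g.2 * x.c' * g.1⁻¹

/-- The involution `τ(V,d,c,V̄,d̄,c̄) = (V̄,d̄,c̄,V,d,c)`. -/
def tauK (x : PtK G ℓ) : PtK G ℓ := ⟨x.a', x.b', x.d', x.c', x.a, x.b, x.d, x.c⟩

/-- Membership in `M^τ`: a point of `M` of the form `(V,d,c,V,d,c)`. -/
def inMtauK (x : PtK G ℓ) : Prop :=
  inMK x ∧ x.a' = x.a ∧ x.b' = x.b ∧ x.d' = x.d ∧ x.c' = x.c

/-- `(V,d)` is generic if every `g` commuting with `d` and with all `aᵢ, bᵢ`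
is central. -/
def GenericK (a b : Fin ℓ → G) (d : G) : Prop :=
  ∀ g : G, g * d = d * g → (∀ i, g * a i = a i * g) →
    (∀ i, g * b i = b i * g) → g ∈ Subgroup.center G

/-- for `r ∈ Z(G)` and `x = (V,d,c,V,d,c·r) ∈ M` one has
`(r,e)·x = τ(x)`; hence `τ(x)` lies in the `K`-orbit of `x`, so the `K`-orbit
of `x` is fixed by the involution induced by `τ` on `M/K`. -/
theorem statement11 (hℓ : 1 ≤ ℓ) (r : G) (hr : r ∈ Subgroup.center G)
    (a b : Fin ℓ → G) (d c : G)
    (hx : inMK (⟨a, b, d, c, a, b, d, c * r⟩ : PtK G ℓ)) :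
    actK (r, (1 : G)) (⟨a, b, d, c, a, b, d, c * r⟩ : PtK G ℓ)
      = tauK (⟨a, b, d, c, a, b, d, c * r⟩ : PtK G ℓ) ∧
    ∃ k : G × G, actK k (⟨a, b, d, c, a, b, d, c * r⟩ : PtK G ℓ)
      = tauK (⟨a, b, d, c, a, b, d, c * r⟩ : PtK G ℓ) := by
  have key : actK (r, (1 : G)) (⟨a, b, d, c, a, b, d, c * r⟩ : PtK G ℓ)
      = tauK (⟨a, b, d, c, a, b, d, c * r⟩ : PtK G ℓ) := by
    have hc := fun g => (Subgroup.mem_center_iff.mp hr g)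
    simp only [actK, tauK, PtK.mk.injEq]
    refine ⟨?_, ?_, ?_, ?_, ?_, ?_, ?_, ?_⟩ <;>
      first
        | (funext i; rw [← hc]; group)
        | (rw [← hc]; group)
        | (rw [← hc c]; group)
        | (rw [one_mul, mul_inv_cancel_right])
        | group
  exact ⟨key, ⟨(r, 1), key⟩⟩
end
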